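/- For any prime p > 2 and integer k ≥ 2, the commutator width of a Sylow p-subgroup of the alternating group A_{p^k} equals 1. -/

import Mathlib

open scoped commutatorElement

set_option linter.unusedSectionVars false

open Equiv Function SemidirectProduct

namespace CWAux

variable (p : ℕ) [Fact p.Prime] (G : Type) [Group G]

def shiftAut (s : ZMod p) : MulAut (ZMod p → G) where
  toFun f := fun i => f (i - s)
  invFun f := fun i => f (i + s)
  left_inv f := by funext i; simp
  right_inv f := by funext i; simp
  map_mul' f g := rfl

def shiftHom : Multiplicative (ZMod p) →* MulAut (ZMod p → G) where
  toFun s := shiftAut p G s.toAdd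
  map_one' := by ext f i; simp [shiftAut]
  map_mul' s t := by ext f i; simp [shiftAut, sub_sub]

@[simp] lemma shiftHom_apply (s : Multiplicative (ZMod p)) (f : ZMod p → G) (i : ZMod p) :
    shiftHom p G s f i = f (i - s.toAdd) := rfl

/-- The wreath product `G ≀ C_p`. -/
abbrev Wr := SemidirectProduct (ZMod p → G) (Multiplicative (ZMod p)) (shiftHom p G)

variable {p G}

lemma commutator_mk (u v : ZMod p → G) (s : Multiplicative (ZMod p)) :
    ⁅(⟨u, s⟩ : Wr p G), (⟨v, 1⟩ : Wr p G)⁆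
      = ⟨fun i => u i * v (i - s.toAdd) * (u i)⁻¹ * (v i)⁻¹, 1⟩ := by
  have : ⁅(⟨u, s⟩ : Wr p G), (⟨v, 1⟩ : Wr p G)⁆
      = (⟨u, s⟩ : Wr p G) * ⟨v, 1⟩ * (⟨u, s⟩ : Wr p G)⁻¹ * (⟨v, 1⟩ : Wr p G)⁻¹ := rfl
  rw [this]
  ext i
  · simp [mul_left, inv_left, mul_right, inv_right, shiftAut, mul_assoc]
  · simp [mul_right, inv_right]

/-- ordered product of the values of `f` -/
def T (f : ZMod p → G) : G := ((List.range p).map fun n : ℕ => f ((n : ZMod p))).prod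

/-- partial products `f 1 * f 2 * ⋯ * f n` -/
def PP (f : ZMod p → G) (n : ℕ) : G :=
  ((List.range n).map fun j : ℕ => f (((j + 1 : ℕ) : ZMod p))).prod

lemma PP_succ (f : ZMod p → G) (n : ℕ) :
    PP f (n + 1) = PP f n * f ((n + 1 : ℕ) : ZMod p) := by
  simp [PP, List.range_succ]

lemma T_eq (f : ZMod p → G) : T f = f 0 * PP f (p - 1) := by
  have hp : p = (p - 1) + 1 := (Nat.succ_pred_eq_of_pos (Fact.out : p.Prime).pos).symm
  rw [T, show List.range p = 0 :: (List.range (p-1)).map Nat.succ from by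
    rw [← List.range_succ_eq_map, ← hp]]
  simp [PP, List.map_map, Function.comp_def, Nat.cast_zero]

lemma listprod_comm {M : Type} [CommMonoid M] (g : ℕ → M) (n : ℕ) :
    ((List.range n).map g).prod = ∏ i ∈ Finset.range n, g i := by
  induction n with
  | zero => simp
  | succ n ih => rw [List.range_succ, Finset.prod_range_succ, ← ih]; simp

lemma of_T (f : ZMod p → G) :
    Abelianization.of (T f) = ∏ i : ZMod p, Abelianization.of (f i) := by
  rw [T, map_list_prod, List.map_map]
  simp only [Function.comp_def]
  rw [listprod_comm (fun n : ℕ => Abelianization.of (f ((n : ZMod p)))) p]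
  refine Finset.prod_nbij' (fun n => (n : ZMod p)) (fun i => i.val) ?_ ?_ ?_ ?_ ?_
  · intro a _; exact Finset.mem_univ _
  · intro i _; exact Finset.mem_range.2 (ZMod.val_lt i)
  · intro a ha; exact ZMod.val_cast_of_lt (Finset.mem_range.1 ha)
  · intro i _; exact ZMod.natCast_zmod_val i
  · intro a _; rfl

variable (p G) in
/-- homomorphism to an abelian group detecting the commutator subgroup of `Wr p G` -/
def chi : Wr p G →* Multiplicative (ZMod p) × Abelianization G where
  toFun w := (w.right, ∏ i : ZMod p, Abelianization.of (w.left i))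
  map_one' := by simp [one_left, one_right]
  map_mul' a b := by
    ext
    · simp [mul_right]
    · simp only [mul_left, Pi.mul_apply, map_mul, Finset.prod_mul_distrib, Prod.snd_mul,
        shiftHom_apply]
      congr 1
      exact Equiv.prod_comp (Equiv.subRight a.right.toAdd) (fun i => Abelianization.of (b.left i))

lemma mem_commutator_wr {w : Wr p G} (hw : w ∈ commutator (Wr p G)) :
    w.right = 1 ∧ T w.left ∈ commutator G := by
  have h := Abelianization.commutator_subset_ker (chi p G) hw
  rw [MonoidHom.mem_ker, chi] at h
  simp only [MonoidHom.coe_mk, OneHom.coe_mk, Prod.mk_eq_one] at h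
  refine ⟨h.1, ?_⟩
  have := of_T w.left
  rw [h.2] at this
  exact (QuotientGroup.eq_one_iff _).1 this

end CWAux

namespace CWAux2
open CWAux

variable {p : ℕ} [Fact p.Prime] {G : Type} [Group G]

lemma wr_single_commutator (HG : ∀ c ∈ commutator G, ∃ α β : G, c = ⁅α, β⁆)
    (f : ZMod p → G) (hf : T f ∈ commutator G) :
    ∃ x y : Wr p G, (⟨f, 1⟩ : Wr p G) = ⁅x, y⁆ := by
  have hp1 : 1 ≤ p := (Fact.out : p.Prime).pos
  set Q : G := PP f (p - 1) with hQ
  have hc' : Q * f 0 ∈ commutator G := by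
    have : Q * f 0 = Q * (T f) * Q⁻¹ := by rw [T_eq, ← hQ]; group
    rw [this]
    exact (Subgroup.Normal.conj_mem inferInstance _ hf Q)
  obtain ⟨α, β, hc⟩ := HG _ hc'
  set u : ZMod p → G := fun i => if i = 0 then Q⁻¹ * α * Q else 1 with hu
  set v : ZMod p → G := fun i => (PP f i.val)⁻¹ * (β * Q) with hv
  refine ⟨⟨u, Multiplicative.ofAdd 1⟩, ⟨v, 1⟩, ?_⟩
  rw [commutator_mk]
  ext i
  · show f i = u i * v (i - (Multiplicative.ofAdd (1 : ZMod p)).toAdd) * (u i)⁻¹ * (v i)⁻¹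
    rw [toAdd_ofAdd]
    by_cases hi : i = 0
    · subst hi
      have hm1 : ((0 : ZMod p) - 1) = ((p - 1 : ℕ) : ZMod p) := by
        rw [Nat.cast_sub hp1]; simp
      have hval : ((p - 1 : ℕ) : ZMod p).val = p - 1 :=
        ZMod.val_cast_of_lt (by omega)
      have hv1 : v (0 - 1) = Q⁻¹ * (β * Q) := by rw [hm1, hv]; simp [hval, hQ]
      have hv0 : v 0 = β * Q := by
        rw [hv]; simp [ZMod.val_zero, PP]
      have hu0 : u 0 = Q⁻¹ * α * Q := by rw [hu]; simp
      rw [hv1, hv0, hu0]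
      have : f 0 = Q⁻¹ * (Q * f 0) := by group
      rw [this, hc]
      group
    · have hival : i.val ≠ 0 := fun h => hi ((ZMod.val_eq_zero i).1 h)
      set m : ℕ := i.val - 1 with hm
      have him : i.val = m + 1 := by omega
      have hisub : i - 1 = ((m : ℕ) : ZMod p) := by
        conv_lhs => rw [← ZMod.natCast_zmod_val i]
        rw [him]; push_cast; ring
      have hmval : ((m : ℕ) : ZMod p).val = m := ZMod.val_cast_of_lt (by
        have := ZMod.val_lt i; omega)
      have hcast : ((m + 1 : ℕ) : ZMod p) = i := by
        rw [← him, ZMod.natCast_zmod_val]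
      have hPP : PP f i.val = PP f m * f i := by
        rw [him, PP_succ, hcast]
      rw [hu]
      simp only [if_neg hi, one_mul, inv_one, mul_one]
      rw [hv, hisub]
      simp only [hmval, hPP]
      group
  · rfl

end CWAux2

namespace CWAux3
open CWAux CWAux2

variable {p : ℕ} [Fact p.Prime] {G : Type} [Group G]

theorem wr_cw (HG : ∀ c ∈ commutator G, ∃ α β : G, c = ⁅α, β⁆) :
    ∀ w ∈ commutator (Wr p G), ∃ x y : Wr p G, w = ⁅x, y⁆ := by
  intro w hw
  obtain ⟨hr, hT⟩ := mem_commutator_wr hw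
  have hw' : w = (⟨w.left, 1⟩ : Wr p G) := by ext <;> simp [hr]
  rw [hw']
  exact wr_single_commutator HG w.left hT

theorem wr_commutator_ne_bot (hG : ∃ g : G, g ≠ 1) : commutator (Wr p G) ≠ ⊥ := by
  obtain ⟨g, hg⟩ := hG
  set v : ZMod p → G := fun i => if i = 0 then g else 1 with hv
  have key : ⁅(⟨1, Multiplicative.ofAdd (1 : ZMod p)⟩ : Wr p G), (⟨v, 1⟩ : Wr p G)⁆ ≠ 1 := by
    rw [commutator_mk]
    intro hcontra
    have hne : (0 : ZMod p) - 1 ≠ 0 := by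
      intro h
      have : (1 : ZMod p) = 0 := by linear_combination -h
      exact one_ne_zero this
    have h0 := congrFun (congrArg SemidirectProduct.left hcontra) 0
    simp [hv, hne] at h0
    exact hg h0
  intro hbot
  have : ⁅(⟨1, Multiplicative.ofAdd (1 : ZMod p)⟩ : Wr p G), (⟨v, 1⟩ : Wr p G)⁆
      ∈ commutator (Wr p G) := by
    rw [commutator_def]
    exact Subgroup.commutator_mem_commutator (Subgroup.mem_top _) (Subgroup.mem_top _)
  rw [hbot, Subgroup.mem_bot] at this
  exact key this

theorem card_wr [Finite G] : Nat.card (Wr p G) = Nat.card G ^ p * p := by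
  have e : Wr p G ≃ (ZMod p → G) × Multiplicative (ZMod p) :=
    ⟨fun w => (w.left, w.right), fun q => ⟨q.1, q.2⟩, fun w => rfl, fun q => rfl⟩
  rw [Nat.card_congr e, Nat.card_prod, Nat.card_pi]
  simp [Nat.card_zmod]

/-- imprimitive action of the wreath product -/
def wrPerm (X : Type) [MulAction G X] : Wr p G →* Equiv.Perm (ZMod p × X) where
  toFun w :=
    { toFun := fun q => (w.right.toAdd + q.1, w.left (w.right.toAdd + q.1) • q.2)
      invFun := fun q => (q.1 - w.right.toAdd, (w.left q.1)⁻¹ • q.2)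
      left_inv := fun q => by simp
      right_inv := fun q => by simp }
  map_one' := by ext q <;> simp [one_left, one_right]
  map_mul' a b := by
    ext q
    · simp [mul_right, Perm.mul_apply, add_assoc]
    · simp [mul_left, mul_right, Perm.mul_apply, shiftHom_apply, toAdd_mul, mul_smul,
        add_assoc, add_sub_cancel_left]

theorem wrPerm_injective (X : Type) [MulAction G X] [FaithfulSMul G X] [Nonempty X] :
    Function.Injective (wrPerm (p := p) (G := G) X) := by
  rw [injective_iff_map_eq_one]
  intro w hw
  have h1 : ∀ q : ZMod p × X, (wrPerm X w) q = q := fun q => by rw [hw]; rfl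
  have hr : w.right = 1 := by
    obtain ⟨x⟩ := ‹Nonempty X›
    have := congrArg Prod.fst (h1 (0, x))
    simp only [wrPerm, MonoidHom.coe_mk, OneHom.coe_mk, coe_fn_mk, add_zero] at this
    exact Multiplicative.toAdd.injective this
  have hl : w.left = 1 := by
    funext i
    refine eq_of_smul_eq_smul (α := X) fun x => ?_
    have := congrArg Prod.snd (h1 (i - w.right.toAdd, x))
    simp only [wrPerm, MonoidHom.coe_mk, OneHom.coe_mk, coe_fn_mk] at this
    simp only [hr, toAdd_one, zero_add, sub_zero] at this
    simp [this]
  ext <;> simp [hl, hr]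

/-- `Perm` congruence as a `MulEquiv`. -/
def permMulEquiv {α β : Type} (e : α ≃ β) : Perm α ≃* Perm β :=
  { Equiv.permCongr e with
    map_mul' := fun a b => by ext x; simp [Equiv.permCongr_apply] }

section transfer
variable {A B : Type} [Group A] [Group B]

theorem commutator_map (e : A ≃* B) :
    commutator B = Subgroup.map e.toMonoidHom (commutator A) := by
  rw [commutator_def, commutator_def, Subgroup.map_commutator,
    Subgroup.map_top_of_surjective _ e.surjective]

theorem transfer_cw (e : A ≃* B) (h1 : ∀ g ∈ commutator A, ∃ x y : A, g = ⁅x, y⁆) :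
    ∀ g ∈ commutator B, ∃ x y : B, g = ⁅x, y⁆ := by
  intro g hg
  rw [commutator_map e] at hg
  obtain ⟨a, ha, rfl⟩ := hg
  obtain ⟨x, y, rfl⟩ := h1 a ha
  exact ⟨e x, e y, map_commutatorElement e.toMonoidHom x y⟩

theorem transfer_ne_bot (e : A ≃* B) (h : commutator A ≠ ⊥) : commutator B ≠ ⊥ := by
  intro hb
  apply h
  rw [eq_bot_iff]
  intro a ha
  have : e a ∈ commutator B := by
    rw [commutator_map e]; exact ⟨a, ha, rfl⟩
  rw [hb, Subgroup.mem_bot] at this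
  rw [Subgroup.mem_bot]
  exact e.injective (by rw [this, map_one])

end transfer
end CWAux3

namespace CWAux4
open CWAux CWAux2 CWAux3 Equiv Function

variable (p : ℕ) [Fact p.Prime]

theorem padicValNat_pow_factorial (k : ℕ) :
    padicValNat p ((p ^ k).factorial) = ∑ i ∈ Finset.range k, p ^ i := by
  induction k with
  | zero => simp
  | succ k ih =>
    have : p ^ (k + 1) = p * p ^ k := by ring
    rw [this, padicValNat_factorial_mul, ih, Finset.sum_range_succ]

theorem sum_pow_succ (k : ℕ) :
    ∑ i ∈ Finset.range (k + 1), p ^ i = (∑ i ∈ Finset.range k, p ^ i) * p + 1 := by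
  rw [Finset.sum_range_succ']
  simp [pow_succ, Finset.sum_mul]

theorem tower (k : ℕ) : ∃ H : Subgroup (Perm (Fin (p ^ k))),
    Nat.card H = p ^ (∑ i ∈ Finset.range k, p ^ i) ∧
    (∀ g ∈ commutator ↥H, ∃ x y : ↥H, g = ⁅x, y⁆) ∧
    (2 ≤ k → commutator ↥H ≠ ⊥) := by
  induction k with
  | zero =>
    refine ⟨⊥, by exact Subgroup.card_bot, ?_, by omega⟩
    intro g hg
    refine ⟨1, 1, ?_⟩
    have : g = 1 := Subtype.ext ((Subgroup.mem_bot).1 g.2)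
    rw [this]; exact (commutatorElement_one_left 1).symm
  | succ k ih =>
    obtain ⟨H, hcard, hcw, hnb⟩ := ih
    haveI : FaithfulSMul ↥H (Fin (p ^ k)) :=
      ⟨fun {g₁ g₂} h => Subtype.ext (Equiv.ext fun x => by
        simpa [Subgroup.smul_def, Equiv.Perm.smul_def] using h x)⟩
    haveI : Nonempty (Fin (p ^ k)) := ⟨⟨0, pow_pos (Fact.out : p.Prime).pos k⟩⟩
    have hcards : Fintype.card (ZMod p × Fin (p ^ k)) = Fintype.card (Fin (p ^ (k + 1))) := by
      simp [ZMod.card, pow_succ, mul_comm]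
    set e : ZMod p × Fin (p ^ k) ≃ Fin (p ^ (k + 1)) := Fintype.equivOfCardEq hcards with he
    set ψ : Wr p ↥H →* Perm (Fin (p ^ (k + 1))) :=
      ((permMulEquiv e).toMonoidHom.comp (wrPerm (Fin (p ^ k)))) with hψ
    have hinj : Function.Injective ψ :=
      (permMulEquiv e).injective.comp (wrPerm_injective _)
    set H' : Subgroup (Perm (Fin (p ^ (k + 1)))) := ψ.range with hH'
    set E : Wr p ↥H ≃* ↥H' := MonoidHom.ofInjective hinj with hE
    haveI : Finite (Wr p ↥H) := by
      have e2 : Wr p ↥H ≃ (ZMod p → ↥H) × Multiplicative (ZMod p) :=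
        ⟨fun w => (w.left, w.right), fun q => ⟨q.1, q.2⟩, fun w => rfl, fun q => rfl⟩
      exact Finite.of_equiv _ e2.symm
    refine ⟨H', ?_, ?_, ?_⟩
    · rw [← Nat.card_congr E.toEquiv, card_wr, hcard, sum_pow_succ, pow_add, ← pow_mul, pow_one]
    · exact transfer_cw E (wr_cw hcw)
    · intro hk2
      refine transfer_ne_bot E (wr_commutator_ne_bot ?_)
      have hk1 : 1 ≤ k := by omega
      have hlt : 1 < Nat.card ↥H := by
        rw [hcard]
        have : 1 ≤ ∑ i ∈ Finset.range k, p ^ i := by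
          calc 1 = p ^ 0 := by simp
          _ ≤ ∑ i ∈ Finset.range k, p ^ i :=
            Finset.single_le_sum (f := fun i => p ^ i) (fun i _ => by positivity)
              (Finset.mem_range.2 (by omega))
        calc 1 < p := (Fact.out : p.Prime).one_lt
        _ = p ^ 1 := (pow_one p).symm
        _ ≤ p ^ (∑ i ∈ Finset.range k, p ^ i) :=
          Nat.pow_le_pow_right (Fact.out : p.Prime).pos this
      haveI : Nontrivial ↥H := Finite.one_lt_card_iff_nontrivial.1 hlt
      obtain ⟨g, hg⟩ := exists_ne (1 : ↥H)
      exact ⟨g, hg⟩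

end CWAux4

open CWAux CWAux2 CWAux3 CWAux4 in
/-- for a prime `p > 2` and `k ≥ 2`, the commutator width of a Sylow
`p`-subgroup of the alternating group `A_{p^k}` equals `1`: every element of its
commutator subgroup is a single commutator, and the commutator subgroup is
nontrivial. -/
theorem cw_sylow_alt_eq_one (p k : ℕ) [Fact p.Prime] (hp : 2 < p) (hk : 2 ≤ k)
    (P : Sylow p (alternatingGroup (Fin (p ^ k)))) :
    (∀ g ∈ commutator ↥P, ∃ a b : ↥P, g = ⁅a, b⁆) ∧ commutator ↥P ≠ ⊥ := by
  obtain ⟨H, hcard, hcw, hnb⟩ := CWAux4.tower p k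
  have hodd : Odd p := (Fact.out : p.Prime).odd_of_ne_two (by omega)
  have hHA : H ≤ alternatingGroup (Fin (p ^ k)) := by
    intro g hg
    rw [Equiv.Perm.mem_alternatingGroup]
    have h1 : orderOf g ∣ p ^ (∑ i ∈ Finset.range k, p ^ i) := by
      rw [← hcard, ← Subgroup.orderOf_mk g hg]
      exact orderOf_dvd_natCard _
    obtain ⟨m, -, hm⟩ := (Nat.dvd_prime_pow (Fact.out : p.Prime)).1 h1
    have hoddord : Odd (orderOf g) := hm ▸ hodd.pow
    have hsign : (Equiv.Perm.sign g) ^ orderOf g = 1 := by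
      rw [← map_pow, pow_orderOf_eq_one, map_one]
    rcases Int.units_eq_one_or (Equiv.Perm.sign g) with h | h
    · exact h
    · rw [h, hoddord.neg_one_pow] at hsign
      exact absurd hsign (by decide)
  haveI : Nontrivial (Fin (p ^ k)) := Fin.nontrivial_iff_two_le.mpr (by
    calc 2 ≤ p := by omega
    _ = p ^ 1 := (pow_one p).symm
    _ ≤ p ^ k := Nat.pow_le_pow_right (by omega) (by omega))
  have hcardA : (Nat.card ↥(alternatingGroup (Fin (p ^ k)))).factorization p
      = ∑ i ∈ Finset.range k, p ^ i := by
    have h2 : 2 * Fintype.card (alternatingGroup (Fin (p ^ k)))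
        = Fintype.card (Equiv.Perm (Fin (p ^ k))) := two_mul_card_alternatingGroup
    rw [Fintype.card_perm, Fintype.card_fin] at h2
    have hA0 : Fintype.card (alternatingGroup (Fin (p ^ k))) ≠ 0 := Fintype.card_ne_zero
    have hfac := congrArg (fun n => n.factorization p) h2
    simp only [Nat.factorization_mul (two_ne_zero) hA0, Finsupp.add_apply] at hfac
    rw [Nat.factorization_eq_zero_of_not_dvd
      (fun hdvd => by have := Nat.le_of_dvd two_pos hdvd; omega), zero_add] at hfac
    rw [Nat.card_eq_fintype_card, hfac, Nat.factorization_def _ (Fact.out : p.Prime),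
      padicValNat_pow_factorial]
  set H₀ := H.subgroupOf (alternatingGroup (Fin (p ^ k))) with hH₀
  have e1 : ↥H₀ ≃* ↥H := Subgroup.subgroupOfEquivOfLe hHA
  have hcard₀ : Nat.card ↥H₀
      = p ^ ((Nat.card ↥(alternatingGroup (Fin (p ^ k)))).factorization p) := by
    rw [hcardA, Nat.card_congr e1.toEquiv, hcard]
  set Q : Sylow p ↥(alternatingGroup (Fin (p ^ k))) := Sylow.ofCard H₀ hcard₀ with hQ
  have EQ : ↥H₀ ≃* ↥P := Sylow.equiv Q P
  have E : ↥H ≃* ↥P := e1.symm.trans EQ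
  exact ⟨transfer_cw E hcw, transfer_ne_bot E (hnb hk)⟩
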